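/- If G is a cubic graph that is not properly 3-edge colourable, and Z is a 3-element vertex set disjoint from V(G), then for every triangle packing of \overline{K_Z} ∨ G (a set of edge-disjoint triangles), some edge incident with a vertex of Z is not covered by any triangle of the packing. Equivalently, \overline{K_Z} ∨ G has no K_3-decomposition and moreover no triangle packing covers all edges meeting Z. -/

import Mathlib

/-- A triangle of a simple graph, represented as a 3-element vertex set. -/
def IsTriangleOf {V : Type*} (G : SimpleGraph V) (T : Finset V) : Prop :=
  T.card = 3 ∧ ∀ x ∈ T, ∀ y ∈ T, x ≠ y → G.Adj x y

/-- A K₃-decomposition: every edge lies in exactly one triangle of the family. -/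
def IsTriangleDecomposition {V : Type*} (G : SimpleGraph V) (D : Set (Finset V)) : Prop :=
  (∀ T ∈ D, IsTriangleOf G T) ∧
  ∀ x y : V, G.Adj x y → ∃! T, T ∈ D ∧ x ∈ T ∧ y ∈ T

/-- A K₃-packing: pairwise edge-disjoint triangles. -/
def IsTrianglePacking {V : Type*} (G : SimpleGraph V) (D : Set (Finset V)) : Prop :=
  (∀ T ∈ D, IsTriangleOf G T) ∧
  ∀ x y : V, x ≠ y → ∀ T₁ ∈ D, ∀ T₂ ∈ D,
    x ∈ T₁ → y ∈ T₁ → x ∈ T₂ → y ∈ T₂ → T₁ = T₂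

/-- A proper edge colouring: distinct incident edges receive distinct colours. -/
def IsProperEdgeColoring {V β : Type*} (G : SimpleGraph V) (c : Sym2 V → β) : Prop :=
  ∀ e₁ ∈ G.edgeSet, ∀ e₂ ∈ G.edgeSet, e₁ ≠ e₂ → (∃ v, v ∈ e₁ ∧ v ∈ e₂) → c e₁ ≠ c e₂

/-- The join `\overline{K_Z} ∨ G`, where `Z = Fin 3` is a 3-element vertex set
disjoint from `V(G)`: edges of `G`, all edges between `Z` and `V(G)`, none inside `Z`. -/
def barJoin {V : Type*} (G : SimpleGraph V) : SimpleGraph (Fin 3 ⊕ V) where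
  Adj x y := match x, y with
    | Sum.inl _, Sum.inl _ => False
    | Sum.inl _, Sum.inr _ => True
    | Sum.inr _, Sum.inl _ => True
    | Sum.inr a, Sum.inr b => G.Adj a b
  symm := by
    constructor
    intro x y h
    cases x <;> cases y <;> simp_all
    exact h.symm
  loopless := by
    constructor
    intro x
    cases x <;> simp_all

/-- `G` is cubic: every vertex has degree 3. -/
def IsCubic {V : Type*} (G : SimpleGraph V) : Prop :=
  ∀ v : V, (G.neighborSet v).ncard = 3

lemma barJoin_adj_inl_inr {V : Type*} (G : SimpleGraph V) (z : Fin 3) (v : V) :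
    (barJoin G).Adj (Sum.inl z) (Sum.inr v) := trivial

lemma barJoin_not_adj_inl_inl {V : Type*} (G : SimpleGraph V) (z z' : Fin 3) :
    ¬ (barJoin G).Adj (Sum.inl z) (Sum.inl z') := fun h => h

lemma barJoin_adj_inr_inr {V : Type*} (G : SimpleGraph V) (a b : V) :
    (barJoin G).Adj (Sum.inr a) (Sum.inr b) ↔ G.Adj a b := Iff.rfl

/-- If `G` is cubic and not 3-edge colourable, then every triangle packing
of `\overline{K_Z} ∨ G` leaves some edge incident with a vertex of `Z` uncovered. -/
theorem stmt1 {V : Type*} (G : SimpleGraph V) (hcubic : IsCubic G)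
    (hncol : ¬ ∃ c : Sym2 V → Fin 3, IsProperEdgeColoring G c) :
    ∀ D : Set (Finset (Fin 3 ⊕ V)), IsTrianglePacking (barJoin G) D →
      ∃ (z : Fin 3) (x : Fin 3 ⊕ V), (barJoin G).Adj (Sum.inl z) x ∧
        ∀ T ∈ D, ¬(Sum.inl z ∈ T ∧ x ∈ T) := by
  classical
  intro D hD
  by_contra hcon
  push_neg at hcon
  obtain ⟨htri, hdisj⟩ := hD
  -- third vertex lemma
  have third : ∀ T ∈ D, ∀ (z : Fin 3) (v : V), Sum.inl z ∈ T → Sum.inr v ∈ T →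
      ∃ w, G.Adj v w ∧ T = {Sum.inl z, Sum.inr v, Sum.inr w} := by
    intro T hT z v hz hv
    obtain ⟨hcard, hadj⟩ := htri T hT
    have hex : ∃ x ∈ T, x ≠ Sum.inl z ∧ x ≠ Sum.inr v := by
      by_contra hx
      push_neg at hx
      have hsub : T ⊆ {Sum.inl z, Sum.inr v} := by
        intro x hxT
        by_cases h1 : x = Sum.inl z
        · simp [h1]
        · simp [hx x hxT h1]
      have h1 := Finset.card_le_card hsub
      have h2 : ({Sum.inl z, Sum.inr v} : Finset (Fin 3 ⊕ V)).card ≤ 2 :=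
        (Finset.card_insert_le _ _).trans (by simp)
      omega
    obtain ⟨x, hxT, hx1, hx2⟩ := hex
    have hadjx : (barJoin G).Adj (Sum.inl z) x := hadj _ hz _ hxT (Ne.symm hx1)
    match x, hadjx with
    | Sum.inl z', hadjx => exact absurd hadjx (barJoin_not_adj_inl_inl G z z')
    | Sum.inr w, hadjx =>
      have hvw : v ≠ w := by
        intro h; exact hx2 (by rw [h])
      have hGvw : G.Adj v w :=
        (barJoin_adj_inr_inr G v w).mp (hadj _ hv _ hxT (by simp [hvw]))
      refine ⟨w, hGvw, ?_⟩
      have hsub : ({Sum.inl z, Sum.inr v, Sum.inr w} : Finset (Fin 3 ⊕ V)) ⊆ T := by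
        intro y hy
        simp only [Finset.mem_insert, Finset.mem_singleton] at hy
        rcases hy with rfl | rfl | rfl <;> assumption
      have hcard3 : ({Sum.inl z, Sum.inr v, Sum.inr w} : Finset (Fin 3 ⊕ V)).card = 3 := by
        rw [Finset.card_insert_of_notMem (by simp),
            Finset.card_insert_of_notMem (by simp [hvw]), Finset.card_singleton]
      exact (Finset.eq_of_subset_of_card_le hsub (by omega)).symm
  -- every G-edge lies in a triangle with a Z-vertex
  have edgecov : ∀ v w : V, G.Adj v w → ∃ z : Fin 3, ∃ T ∈ D,
      Sum.inl z ∈ T ∧ Sum.inr v ∈ T ∧ Sum.inr w ∈ T := by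
    intro v w hvw
    have hz : ∀ z : Fin 3, ∃ u, G.Adj v u ∧ ∃ T ∈ D,
        T = {Sum.inl z, Sum.inr v, Sum.inr u} := by
      intro z
      obtain ⟨T, hT, hzT, hvT⟩ := hcon z (Sum.inr v) (barJoin_adj_inl_inr G z v)
      obtain ⟨u, hu, hTeq⟩ := third T hT z v hzT hvT
      exact ⟨u, hu, T, hT, hTeq⟩
    choose f hf hfD using hz
    have hinj : Function.Injective f := by
      intro z z' hzz
      obtain ⟨T, hT, hTe⟩ := hfD z
      obtain ⟨T', hT', hTe'⟩ := hfD z'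
      have hvu : (Sum.inr v : Fin 3 ⊕ V) ≠ Sum.inr (f z) := by
        simp [(hf z).ne]
      have hTT := hdisj (Sum.inr v) (Sum.inr (f z)) hvu T hT T' hT'
        (by simp [hTe]) (by simp [hTe]) (by simp [hTe', hzz]) (by simp [hTe', hzz])
      have hzmem : (Sum.inl z : Fin 3 ⊕ V) ∈ T' := hTT ▸ (by simp [hTe])
      rw [hTe'] at hzmem
      simpa using hzmem
    have hfin : (G.neighborSet v).Finite := by
      rcases (G.neighborSet v).finite_or_infinite with h | h
      · exact h
      · have := hcubic v
        rw [h.ncard] at this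
        omega
    have hsub : Set.range f ⊆ G.neighborSet v := by
      rintro _ ⟨z, rfl⟩; exact hf z
    have hrange : (Set.range f).ncard = 3 := by
      rw [← Set.image_univ, Set.ncard_image_of_injective _ hinj, Set.ncard_univ]
      simp
    have heq : Set.range f = G.neighborSet v :=
      Set.eq_of_subset_of_ncard_le hsub (by rw [hcubic v, hrange]) hfin
    have hwmem : w ∈ Set.range f := heq ▸ hvw
    obtain ⟨z, rfl⟩ := hwmem
    obtain ⟨T, hT, hTe⟩ := hfD z
    exact ⟨z, T, hT, by simp [hTe], by simp [hTe], by simp [hTe]⟩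
  -- uniqueness of the Z-vertex for a given edge
  have uniq : ∀ v w : V, v ≠ w → ∀ z z' : Fin 3, ∀ T ∈ D, ∀ T' ∈ D,
      Sum.inl z ∈ T → Sum.inr v ∈ T → Sum.inr w ∈ T →
      Sum.inl z' ∈ T' → Sum.inr v ∈ T' → Sum.inr w ∈ T' → z = z' := by
    intro v w hvw z z' T hT T' hT' hz hv hw hz' hv' hw'
    have hTT := hdisj (Sum.inr v) (Sum.inr w) (by simp [hvw]) T hT T' hT' hv hw hv' hw'
    subst hTT
    obtain ⟨u, hu, hTe⟩ := third T hT z v hz hv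
    rw [hTe] at hz'
    symm; simpa using hz'
  -- define the colouring
  set P : Sym2 V → Prop := fun e => ∃ z : Fin 3, ∃ T ∈ D,
    Sum.inl z ∈ T ∧ ∀ a ∈ e, Sum.inr a ∈ T with hP
  have hPedge : ∀ v w : V, G.Adj v w → P s(v, w) := by
    intro v w hvw
    obtain ⟨z, T, hT, hz, hv, hw⟩ := edgecov v w hvw
    refine ⟨z, T, hT, hz, ?_⟩
    intro a ha
    rcases Sym2.mem_iff.mp ha with rfl | rfl <;> assumption
  apply hncol
  refine ⟨fun e => if h : P e then h.choose else 0, ?_⟩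
  intro e₁ he₁ e₂ he₂ hne ⟨v, hv1, hv2⟩ heq
  set a := Sym2.Mem.other hv1 with ha
  set b := Sym2.Mem.other hv2 with hb
  have he1 : s(v, a) = e₁ := Sym2.other_spec hv1
  have he2 : s(v, b) = e₂ := Sym2.other_spec hv2
  have hGa : G.Adj v a := by rw [← SimpleGraph.mem_edgeSet, he1]; exact he₁
  have hGb : G.Adj v b := by rw [← SimpleGraph.mem_edgeSet, he2]; exact he₂
  have hab : a ≠ b := by
    intro h
    apply hne
    rw [← he1, ← he2, h]
  have hP1 : P e₁ := he1 ▸ hPedge v a hGa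
  have hP2 : P e₂ := he2 ▸ hPedge v b hGb
  simp only [dif_pos hP1, dif_pos hP2] at heq
  obtain ⟨T₁, hT₁, hz₁, hmem₁⟩ := hP1.choose_spec
  obtain ⟨T₂, hT₂, hz₂, hmem₂⟩ := hP2.choose_spec
  rw [heq] at hz₁
  have hvT₁ : Sum.inr v ∈ T₁ := hmem₁ v hv1
  have haT₁ : Sum.inr a ∈ T₁ := hmem₁ a (by rw [← he1]; simp)
  have hvT₂ : Sum.inr v ∈ T₂ := hmem₂ v hv2
  have hbT₂ : Sum.inr b ∈ T₂ := hmem₂ b (by rw [← he2]; simp)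
  have hTT : T₁ = T₂ := hdisj (Sum.inl hP2.choose) (Sum.inr v) (by simp)
    T₁ hT₁ T₂ hT₂ hz₁ hvT₁ hz₂ hvT₂
  subst hTT
  obtain ⟨u, hu, hTe⟩ := third T₁ hT₁ hP2.choose v hz₁ hvT₁
  rw [hTe] at haT₁ hbT₂
  simp only [Finset.mem_insert, Finset.mem_singleton, Sum.inr.injEq, reduceCtorEq,
    false_or] at haT₁ hbT₂
  have hau : a = u := haT₁.resolve_left (fun h => hGa.ne h.symm)
  have hbu : b = u := hbT₂.resolve_left (fun h => hGb.ne h.symm)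
  exact hab (hau.trans hbu.symm)
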